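/- Dissipative quantum Ising chain, single-site estimates: in the algebra M₂(ℂ) of 2×2 complex matrices let σ³ := [[1,0],[0,−1]], σ⁺ := [[0,1],[0,0]], σ⁻ := [[0,0],[1,0]], and let |↓⟩ := (0,1)ᵀ ∈ ℂ². For h ∈ ℝ define the linear map G on M₂(ℂ) by G(A) := i h (σ³A − Aσ³) + σ⁺Aσ⁻ − (1/2)(A σ⁺σ⁻ + σ⁺σ⁻ A), and define Q on M₂(ℂ) by Q(A) := ⟨↓|A|↓⟩·1. Then: (a) Q is a projection with range spanned by the identity and Q∘G = G∘Q = 0; in particular the state A ↦ ⟨↓|A|↓⟩ is stationary for e^{tG}; and (b) for every integer n ≥ 1, every t ≥ 0 and every h ∈ ℝ, the linear map (e^{tG}∘(id − Q)) ⊗ id on M₂(ℂ) ⊗ M_n(ℂ) ≅ M_{2n}(ℂ) has operator norm (with respect to the matrix operator norm on M_{2n}(ℂ)) at most 4 e^{−t/2}; i.e. the completely bounded norm bound ‖e^{tG}∘(id−Q)‖_cb ≤ 4 e^{−t/2} holds (the constants M = 4, g = 1/2 of the paper's main assumption). -/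

import Mathlib

noncomputable section
set_option maxHeartbeats 1000000

namespace QMS

/-- The matrix algebra `M_k(ℂ)` with the operator norm, realized as the algebra of
continuous linear endomorphisms of `ℂ^k`. -/
abbrev MatAlg (k : ℕ) : Type :=
  EuclideanSpace ℂ (Fin k) →L[ℂ] EuclideanSpace ℂ (Fin k)

/-- `M₂(ℂ) ⊗ M_n(ℂ) ≅ M_{2n}(ℂ)`, realized as the continuous linear endomorphisms
of `ℂ² ⊗ ℂ^n`. -/
abbrev MatAlg2n (n : ℕ) : Type :=
  EuclideanSpace ℂ (Fin 2 × Fin n) →L[ℂ] EuclideanSpace ℂ (Fin 2 × Fin n)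

/-- The exponential of a continuous linear endomorphism, defined by its power series. -/
def expCLM {E : Type*} [NormedAddCommGroup E] [NormedSpace ℂ E] (T : E →L[ℂ] E) : E →L[ℂ] E :=
  ∑' k : ℕ, ((k.factorial : ℂ))⁻¹ • T ^ k

/-- The Pauli matrix `σ³`. -/
def sigma3 : MatAlg 2 := Matrix.toEuclideanCLM (𝕜 := ℂ) !![1, 0; 0, -1]

/-- The raising operator `σ⁺`. -/
def sigmaPlus : MatAlg 2 := Matrix.toEuclideanCLM (𝕜 := ℂ) !![0, 1; 0, 0]

/-- The lowering operator `σ⁻`. -/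
def sigmaMinus : MatAlg 2 := Matrix.toEuclideanCLM (𝕜 := ℂ) !![0, 0; 1, 0]

/-- The matrix entry `⟨↓|A|↓⟩`, i.e. the `(2,2)` entry of `A`. -/
def downEntry (A : MatAlg 2) : ℂ := (Matrix.toEuclideanCLM (𝕜 := ℂ)).symm A 1 1

/-- Left multiplication by `a` as a super-operator. -/
def mulL (a : MatAlg 2) : MatAlg 2 →L[ℂ] MatAlg 2 := ContinuousLinearMap.mul ℂ (MatAlg 2) a

/-- Right multiplication by `a` as a super-operator. -/
def mulR (a : MatAlg 2) : MatAlg 2 →L[ℂ] MatAlg 2 :=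
  (ContinuousLinearMap.mul ℂ (MatAlg 2)).flip a

/-- The Lindblad generator
`G(A) = i h (σ³A − Aσ³) + σ⁺Aσ⁻ − ½(A σ⁺σ⁻ + σ⁺σ⁻ A)` of the single-site dynamics. -/
def Gising (h : ℝ) : MatAlg 2 →L[ℂ] MatAlg 2 :=
  (Complex.I * (h : ℂ)) • (mulL sigma3 - mulR sigma3) +
    (mulL sigmaPlus).comp (mulR sigmaMinus) -
    (2 : ℂ)⁻¹ • (mulR (sigmaPlus * sigmaMinus) + mulL (sigmaPlus * sigmaMinus))

/-- The projection `Q(A) = ⟨↓|A|↓⟩·1`. -/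
def Qdown : MatAlg 2 →L[ℂ] MatAlg 2 :=
  LinearMap.toContinuousLinearMap
    { toFun := fun A => downEntry A • (1 : MatAlg 2)
      map_add' := fun A B => by
        simp only [downEntry, map_add, Matrix.add_apply]
        exact add_smul (M := MatAlg 2) _ _ _
      map_smul' := fun c A => by simp [downEntry, smul_smul] }

/-- The map `T ⊗ id` on `M₂(ℂ) ⊗ M_n(ℂ) ≅ M_{2n}(ℂ)`, acting as `T` on the first
Kronecker factor and trivially on the second. -/
def tensorId (n : ℕ) (T : MatAlg 2 →L[ℂ] MatAlg 2) (B : MatAlg2n n) : MatAlg2n n :=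
  Matrix.toEuclideanCLM (𝕜 := ℂ) (Matrix.of fun p q : Fin 2 × Fin n =>
    ∑ a : Fin 2, ∑ b : Fin 2,
      (Matrix.toEuclideanCLM (𝕜 := ℂ)).symm
          (T (Matrix.toEuclideanCLM (𝕜 := ℂ) (Matrix.single a b 1))) p.1 q.1 *
        (Matrix.toEuclideanCLM (𝕜 := ℂ)).symm B (a, p.2) (b, q.2))

/-! ### Auxiliary lemmas -/

set_option synthInstance.maxHeartbeats 1000000

section Aux

open NormedSpace

lemma clm_apply {ι : Type*} [Fintype ι] [DecidableEq ι] (M : Matrix ι ι ℂ)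
    (x : EuclideanSpace ℂ ι) (p : ι) :
    (Matrix.toEuclideanCLM (𝕜 := ℂ) M x) p = ∑ j, M p j * x j := by
  have h2 : (WithLp.ofLp (Matrix.toEuclideanCLM (𝕜 := ℂ) M x)) p
      = ∑ j, M p j * x j := by
    rw [Matrix.ofLp_toEuclideanCLM (𝕜 := ℂ) M x]
    simp [Matrix.toLin'_apply, Matrix.mulVec, dotProduct]
  exact h2

lemma clm_entry {ι : Type*} [Fintype ι] [DecidableEq ι]
    (S : EuclideanSpace ℂ ι →L[ℂ] EuclideanSpace ℂ ι) (p q : ι) :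
    (Matrix.toEuclideanCLM (𝕜 := ℂ)).symm S p q = S (EuclideanSpace.single q 1) p := by
  conv_rhs => rw [← (Matrix.toEuclideanCLM (𝕜 := ℂ)).apply_symm_apply S]
  rw [clm_apply]
  simp [EuclideanSpace.single_apply]

lemma expCLM_eq_exp {E : Type*} [NormedAddCommGroup E] [NormedSpace ℂ E] [CompleteSpace E]
    (T : E →L[ℂ] E) : expCLM T = NormedSpace.exp T := by
  rw [exp_eq_tsum (𝕂 := ℂ)]; rfl

lemma expCLM_eigen {E : Type*} [NormedAddCommGroup E] [NormedSpace ℂ E] [CompleteSpace E]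
    (T : E →L[ℂ] E) (v : E) (μ : ℂ) (hv : T v = μ • v) :
    expCLM T v = Complex.exp μ • v := by
  rw [expCLM_eq_exp]
  have hpow : ∀ k : ℕ, (T ^ k) v = μ ^ k • v := by
    intro k
    induction k with
    | zero => simp
    | succ k ih =>
      rw [pow_succ, pow_succ, ContinuousLinearMap.mul_apply, hv, map_smul, ih, smul_smul, mul_comm]
  have h1 : HasSum (fun k : ℕ => ((k.factorial : ℂ))⁻¹ • (T ^ k)) (NormedSpace.exp T) :=
    exp_series_hasSum_exp' T
  have h2 := h1.mapL (ContinuousLinearMap.apply ℂ E v)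
  simp only [ContinuousLinearMap.apply_apply, ContinuousLinearMap.smul_apply, hpow] at h2
  have h3 : HasSum (fun k : ℕ => ((k.factorial : ℂ))⁻¹ * μ ^ k) (Complex.exp μ) := by
    have := exp_series_hasSum_exp' (𝕂 := ℂ) μ
    simpa [Complex.exp_eq_exp_ℂ, smul_eq_mul] using this
  have h4 := h3.smul_const v
  simp only [smul_smul] at h2 h4
  exact h2.unique h4

/-- matrix units in `MatAlg 2`. -/
def Eb (a b : Fin 2) : MatAlg 2 :=
  Matrix.toEuclideanCLM (𝕜 := ℂ) (Matrix.single a b 1)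

/-- The generator in matrix coordinates. -/
lemma G_matrix (h : ℝ) (M : Matrix (Fin 2) (Fin 2) ℂ) :
    Gising h (Matrix.toEuclideanCLM (𝕜 := ℂ) M) = Matrix.toEuclideanCLM (𝕜 := ℂ)
      ((Complex.I * (h : ℂ)) • ((!![1, 0; 0, -1] : Matrix (Fin 2) (Fin 2) ℂ) * M
          - M * !![1, 0; 0, -1]) +
        !![0, 1; 0, 0] * M * !![0, 0; 1, 0] -
        (2 : ℂ)⁻¹ • (M * (!![0, 1; 0, 0] * !![0, 0; 1, 0]) +
          (!![0, 1; 0, 0] * !![0, 0; 1, 0]) * M)) := by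
  set A := Matrix.toEuclideanCLM (𝕜 := ℂ) M with hA
  have hG : Gising h A = (Complex.I * (h : ℂ)) • (sigma3 * A - A * sigma3) +
      sigmaPlus * A * sigmaMinus -
      (2 : ℂ)⁻¹ • (A * (sigmaPlus * sigmaMinus) + (sigmaPlus * sigmaMinus) * A) := by
    simp [Gising, mulL, mulR, ContinuousLinearMap.mul_apply',
      ContinuousLinearMap.add_apply, ContinuousLinearMap.sub_apply,
      ContinuousLinearMap.smul_apply, ContinuousLinearMap.comp_apply,
      ContinuousLinearMap.flip_apply, mul_assoc]
  rw [hG]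
  simp only [map_add, map_sub, map_smul, map_mul, hA, sigma3, sigmaPlus, sigmaMinus]

end Aux

end QMS

namespace QMS
section Aux2

lemma matrix_calc_taut (M : Matrix (Fin 2) (Fin 2) ℂ) (h : ℝ) : True := trivial

lemma G_one (h : ℝ) : Gising h (1 : MatAlg 2) = 0 := by
  have h1 : (1 : MatAlg 2) = Matrix.toEuclideanCLM (𝕜 := ℂ) (1 : Matrix (Fin 2) (Fin 2) ℂ) := by
    simp
  rw [h1, G_matrix]
  have : ((Complex.I * (h : ℂ)) • ((!![1, 0; 0, -1] : Matrix (Fin 2) (Fin 2) ℂ) * 1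
          - 1 * !![1, 0; 0, -1]) +
        !![0, 1; 0, 0] * 1 * !![0, 0; 1, 0] -
        (2 : ℂ)⁻¹ • ((1 : Matrix (Fin 2) (Fin 2) ℂ) * (!![0, 1; 0, 0] * !![0, 0; 1, 0]) +
          (!![0, 1; 0, 0] * !![0, 0; 1, 0]) * 1)) = 0 := by
    ext i j
    fin_cases i <;> fin_cases j <;>
      simp [Matrix.mul_apply, Fin.sum_univ_two, Matrix.one_apply] <;> ring
  rw [this, map_zero]

lemma G_E00 (h : ℝ) : Gising h (Eb 0 0) = (-1 : ℂ) • Eb 0 0 := by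
  rw [Eb, G_matrix, ← map_smul]
  congr 1
  ext i j
  fin_cases i <;> fin_cases j <;>
    simp [Matrix.mul_apply, Fin.sum_univ_two, Matrix.single, Matrix.of_apply,
      Matrix.vecHead, Matrix.vecTail] <;> ring

lemma G_E01 (h : ℝ) :
    Gising h (Eb 0 1) = (2 * Complex.I * (h : ℂ) - 2⁻¹) • Eb 0 1 := by
  rw [Eb, G_matrix, ← map_smul]
  congr 1
  ext i j
  fin_cases i <;> fin_cases j <;>
    simp [Matrix.mul_apply, Fin.sum_univ_two, Matrix.single, Matrix.of_apply,
      Matrix.vecHead, Matrix.vecTail] <;> ring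

lemma G_E10 (h : ℝ) :
    Gising h (Eb 1 0) = (-(2 * Complex.I * (h : ℂ)) - 2⁻¹) • Eb 1 0 := by
  rw [Eb, G_matrix, ← map_smul]
  congr 1
  ext i j
  fin_cases i <;> fin_cases j <;>
    simp [Matrix.mul_apply, Fin.sum_univ_two, Matrix.single, Matrix.of_apply,
      Matrix.vecHead, Matrix.vecTail] <;> ring

lemma G_E11 (h : ℝ) : Gising h (Eb 1 1) = Eb 0 0 := by
  rw [Eb, G_matrix, Eb]
  congr 1
  ext i j
  fin_cases i <;> fin_cases j <;>
    simp [Matrix.mul_apply, Fin.sum_univ_two, Matrix.single, Matrix.of_apply,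
      Matrix.vecHead, Matrix.vecTail] <;> ring

end Aux2
end QMS

namespace QMS
section Aux3


lemma Eb_decomp (A : MatAlg 2) :
    A = ((Matrix.toEuclideanCLM (𝕜 := ℂ)).symm A 1 1) • (1 : MatAlg 2) + ((Matrix.toEuclideanCLM (𝕜 := ℂ)).symm A 0 0 - (Matrix.toEuclideanCLM (𝕜 := ℂ)).symm A 1 1) • Eb 0 0
      + ((Matrix.toEuclideanCLM (𝕜 := ℂ)).symm A 0 1) • Eb 0 1 + ((Matrix.toEuclideanCLM (𝕜 := ℂ)).symm A 1 0) • Eb 1 0 := by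
  have hm : ∀ M : Matrix (Fin 2) (Fin 2) ℂ,
      M 1 1 • (1 : Matrix (Fin 2) (Fin 2) ℂ) + (M 0 0 - M 1 1) • Matrix.single 0 0 1
        + M 0 1 • Matrix.single 0 1 1 + M 1 0 • Matrix.single 1 0 1 = M := by
    intro M
    ext i j
    fin_cases i <;> fin_cases j <;>
      simp [Matrix.single, Matrix.one_apply, Matrix.of_apply]
  have key : ((Matrix.toEuclideanCLM (𝕜 := ℂ)).symm A 1 1) • (1 : MatAlg 2)
      + ((Matrix.toEuclideanCLM (𝕜 := ℂ)).symm A 0 0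
        - (Matrix.toEuclideanCLM (𝕜 := ℂ)).symm A 1 1) • Eb 0 0
      + ((Matrix.toEuclideanCLM (𝕜 := ℂ)).symm A 0 1) • Eb 0 1
      + ((Matrix.toEuclideanCLM (𝕜 := ℂ)).symm A 1 0) • Eb 1 0
      = Matrix.toEuclideanCLM (𝕜 := ℂ)
        (((Matrix.toEuclideanCLM (𝕜 := ℂ)).symm A 1 1) • (1 : Matrix (Fin 2) (Fin 2) ℂ)
          + ((Matrix.toEuclideanCLM (𝕜 := ℂ)).symm A 0 0
            - (Matrix.toEuclideanCLM (𝕜 := ℂ)).symm A 1 1) • Matrix.single 0 0 1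
          + ((Matrix.toEuclideanCLM (𝕜 := ℂ)).symm A 0 1) • Matrix.single 0 1 1
          + ((Matrix.toEuclideanCLM (𝕜 := ℂ)).symm A 1 0) • Matrix.single 1 0 1) := by
    simp only [map_add, map_smul, map_one, Eb]
  rw [key, hm, (Matrix.toEuclideanCLM (𝕜 := ℂ)).apply_symm_apply A]

lemma smul_eigen_helper {E : Type*} [NormedAddCommGroup E] [NormedSpace ℂ E] [CompleteSpace E]
    (T : E →L[ℂ] E) (t : ℝ) (v : E) (μ : ℂ) (hv : T v = μ • v) :
    expCLM (t • T) v = Complex.exp ((t : ℂ) * μ) • v := by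
  apply expCLM_eigen
  rw [ContinuousLinearMap.smul_apply, hv, ← smul_assoc, Complex.real_smul]

lemma expT_one (h : ℝ) (t : ℝ) : expCLM (t • Gising h) (1 : MatAlg 2) = 1 := by
  have := smul_eigen_helper (Gising h) t 1 0 (by rw [G_one]; exact (zero_smul ℂ (1 : MatAlg 2)).symm)
  simpa using this

lemma expT_E00 (h : ℝ) (t : ℝ) :
    expCLM (t • Gising h) (Eb 0 0) = Complex.exp (-(t : ℂ)) • Eb 0 0 := by
  have := smul_eigen_helper (Gising h) t (Eb 0 0) (-1) (G_E00 h)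
  simpa [mul_comm] using this

lemma expT_E01 (h : ℝ) (t : ℝ) :
    expCLM (t • Gising h) (Eb 0 1) =
      Complex.exp ((t : ℂ) * (2 * Complex.I * (h : ℂ) - 2⁻¹)) • Eb 0 1 :=
  smul_eigen_helper (Gising h) t (Eb 0 1) _ (G_E01 h)

lemma expT_E10 (h : ℝ) (t : ℝ) :
    expCLM (t • Gising h) (Eb 1 0) =
      Complex.exp ((t : ℂ) * (-(2 * Complex.I * (h : ℂ)) - 2⁻¹)) • Eb 1 0 :=
  smul_eigen_helper (Gising h) t (Eb 1 0) _ (G_E10 h)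

@[simp] lemma downEntry_one : downEntry (1 : MatAlg 2) = 1 := by
  simp [downEntry, Matrix.one_apply]

@[simp] lemma downEntry_Eb (a b : Fin 2) :
    downEntry (Eb a b) = if a = 1 ∧ b = 1 then 1 else 0 := by
  simp only [downEntry, Eb, StarAlgEquiv.symm_apply_apply]
  simp [Matrix.single, eq_comm]

@[simp] lemma downEntry_add (A B : MatAlg 2) :
    downEntry (A + B) = downEntry A + downEntry B := by
  simp [downEntry]

@[simp] lemma downEntry_smul (c : ℂ) (A : MatAlg 2) :
    downEntry (c • A) = c * downEntry A := by
  simp [downEntry]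

lemma Qdown_apply (A : MatAlg 2) : Qdown A = downEntry A • (1 : MatAlg 2) := rfl

lemma downEntry_G (h : ℝ) (A : MatAlg 2) : downEntry (Gising h A) = 0 := by
  rw [← (Matrix.toEuclideanCLM (𝕜 := ℂ)).apply_symm_apply A, G_matrix, downEntry]
  simp only [StarAlgEquiv.symm_apply_apply]
  simp [Matrix.mul_apply, Fin.sum_univ_two, Matrix.one_apply, Matrix.vecHead, Matrix.vecTail,
    Matrix.vecMul, dotProduct]

lemma downEntry_expT (h : ℝ) (t : ℝ) (A : MatAlg 2) :
    downEntry (expCLM (t • Gising h) A) = downEntry A := by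
  conv_lhs => rw [Eb_decomp A]
  rw [map_add, map_add, map_add, map_smul, map_smul, map_smul, map_smul,
    expT_one, expT_E00, expT_E01, expT_E10]
  simp [smul_smul, downEntry, Eb, StarAlgEquiv.symm_apply_apply, Matrix.single,
    Matrix.one_apply]

end Aux3
end QMS

namespace QMS
section Aux4

variable {n : ℕ}

/-- Inclusion of `ℂ^n` as the `a`-th row block of `ℂ^{2n}`. -/
def incl (n : ℕ) (a : Fin 2) :
    EuclideanSpace ℂ (Fin n) →L[ℂ] EuclideanSpace ℂ (Fin 2 × Fin n) :=
  LinearMap.toContinuousLinearMap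
    { toFun := fun x => (WithLp.equiv 2 _).symm
        (fun p : Fin 2 × Fin n => if p.1 = a then x p.2 else 0)
      map_add' := fun x y => by
        apply (WithLp.equiv 2 _).injective
        funext p
        by_cases hp : p.1 = a <;> simp [hp, WithLp.equiv_symm_apply, PiLp.toLp_apply]
      map_smul' := fun c x => by
        apply (WithLp.equiv 2 _).injective
        funext p
        by_cases hp : p.1 = a <;> simp [hp, WithLp.equiv_symm_apply, PiLp.toLp_apply] }

/-- Projection of `ℂ^{2n}` onto the `a`-th row block. -/
def proj (n : ℕ) (a : Fin 2) :
    EuclideanSpace ℂ (Fin 2 × Fin n) →L[ℂ] EuclideanSpace ℂ (Fin n) :=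
  LinearMap.toContinuousLinearMap
    { toFun := fun y => (WithLp.equiv 2 _).symm (fun p : Fin n => y (a, p))
      map_add' := fun x y => by
        apply (WithLp.equiv 2 _).injective
        funext p
        simp [WithLp.equiv_symm_apply, PiLp.toLp_apply]
      map_smul' := fun c x => by
        apply (WithLp.equiv 2 _).injective
        funext p
        simp [WithLp.equiv_symm_apply, PiLp.toLp_apply] }

lemma incl_apply (a : Fin 2) (x : EuclideanSpace ℂ (Fin n)) (p : Fin 2 × Fin n) :
    incl n a x p = if p.1 = a then x p.2 else 0 := rfl

lemma proj_apply (a : Fin 2) (y : EuclideanSpace ℂ (Fin 2 × Fin n)) (p : Fin n) :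
    proj n a y p = y (a, p) := rfl

lemma incl_norm (a : Fin 2) (x : EuclideanSpace ℂ (Fin n)) : ‖incl n a x‖ = ‖x‖ := by
  rw [EuclideanSpace.norm_eq, EuclideanSpace.norm_eq]
  congr 1
  rw [Fintype.sum_prod_type]
  have : ∀ b : Fin 2, ∑ p : Fin n, ‖incl n a x (b, p)‖ ^ 2
      = if b = a then ∑ p : Fin n, ‖x p‖ ^ 2 else 0 := by
    intro b
    by_cases hb : b = a <;> simp [incl_apply, hb]
  simp only [this]
  simp

lemma norm_proj_le (a : Fin 2) (y : EuclideanSpace ℂ (Fin 2 × Fin n)) :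
    ‖proj n a y‖ ≤ ‖y‖ := by
  rw [EuclideanSpace.norm_eq, EuclideanSpace.norm_eq]
  apply Real.sqrt_le_sqrt
  rw [Fintype.sum_prod_type]
  have : ∑ p : Fin n, ‖proj n a y p‖ ^ 2 = ∑ p : Fin n, ‖y (a, p)‖ ^ 2 := by
    simp [proj_apply]
  rw [this]
  exact Finset.single_le_sum (f := fun b : Fin 2 => ∑ p : Fin n, ‖y (b, p)‖ ^ 2)
    (fun i _ => Finset.sum_nonneg fun p _ => by positivity) (Finset.mem_univ a)

lemma opNorm_incl_le (a : Fin 2) : ‖incl n a‖ ≤ 1 :=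
  ContinuousLinearMap.opNorm_le_bound _ zero_le_one fun x => by rw [incl_norm, one_mul]

lemma opNorm_proj_le (a : Fin 2) : ‖proj n a‖ ≤ 1 :=
  ContinuousLinearMap.opNorm_le_bound _ zero_le_one fun x => by
    rw [one_mul]; exact norm_proj_le a x

lemma proj_single (a q1 : Fin 2) (q2 : Fin n) :
    proj n a (EuclideanSpace.single (q1, q2) (1 : ℂ))
      = if a = q1 then EuclideanSpace.single q2 (1 : ℂ) else 0 := by
  apply (WithLp.equiv 2 _).injective
  funext p
  by_cases ha : a = q1 <;>
    simp_all [proj_apply, EuclideanSpace.single_apply, Prod.ext_iff, WithLp.equiv_apply] <;>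
    split_ifs <;> simp_all

lemma incl_single (b : Fin 2) (q2 : Fin n) :
    incl n b (EuclideanSpace.single q2 (1 : ℂ)) = EuclideanSpace.single (b, q2) (1 : ℂ) := by
  apply (WithLp.equiv 2 _).injective
  funext p
  simp [incl_apply, EuclideanSpace.single_apply, Prod.ext_iff, WithLp.equiv_apply, eq_comm]
  split_ifs <;> simp_all

end Aux4
end QMS

namespace QMS
section Aux5

lemma Eb_def (a b : Fin 2) :
    Matrix.toEuclideanCLM (𝕜 := ℂ) (Matrix.single a b 1) = Eb a b := rfl

lemma symm_Eb (a b : Fin 2) :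
    (Matrix.toEuclideanCLM (𝕜 := ℂ)).symm (Eb a b) = Matrix.single a b 1 := by
  simp [Eb]

lemma one_decomp : (1 : MatAlg 2) = Eb 0 0 + Eb 1 1 := by
  have : (1 : Matrix (Fin 2) (Fin 2) ℂ)
      = Matrix.single 0 0 1 + Matrix.single 1 1 1 := by
    ext i j
    fin_cases i <;> fin_cases j <;> simp [Matrix.single, Matrix.one_apply]
  calc (1 : MatAlg 2) = Matrix.toEuclideanCLM (𝕜 := ℂ) (1 : Matrix (Fin 2) (Fin 2) ℂ) := by simp
    _ = Eb 0 0 + Eb 1 1 := by rw [this, map_add]; rfl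

/-- The defect super-operator `e^{tG}(1 - Q)`. -/
def Tsup (h t : ℝ) : MatAlg 2 →L[ℂ] MatAlg 2 := expCLM (t • Gising h) ∘L (1 - Qdown)

lemma Tsup_E00 (h t : ℝ) : Tsup h t (Eb 0 0) = Complex.exp (-(t : ℂ)) • Eb 0 0 := by
  have h1 : (1 - Qdown) (Eb 0 0) = Eb 0 0 := by
    simp only [ContinuousLinearMap.sub_apply, ContinuousLinearMap.one_apply, Qdown_apply,
      downEntry_Eb]
    norm_num
    exact zero_smul ℂ (1 : MatAlg 2)
  rw [Tsup, ContinuousLinearMap.comp_apply, h1, expT_E00]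

lemma Tsup_E01 (h t : ℝ) :
    Tsup h t (Eb 0 1) = Complex.exp ((t : ℂ) * (2 * Complex.I * (h : ℂ) - 2⁻¹)) • Eb 0 1 := by
  have h1 : (1 - Qdown) (Eb 0 1) = Eb 0 1 := by
    simp only [ContinuousLinearMap.sub_apply, ContinuousLinearMap.one_apply, Qdown_apply,
      downEntry_Eb]
    norm_num
    exact zero_smul ℂ (1 : MatAlg 2)
  rw [Tsup, ContinuousLinearMap.comp_apply, h1, expT_E01]

lemma Tsup_E10 (h t : ℝ) :
    Tsup h t (Eb 1 0) = Complex.exp ((t : ℂ) * (-(2 * Complex.I * (h : ℂ)) - 2⁻¹)) • Eb 1 0 := by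
  have h1 : (1 - Qdown) (Eb 1 0) = Eb 1 0 := by
    simp only [ContinuousLinearMap.sub_apply, ContinuousLinearMap.one_apply, Qdown_apply,
      downEntry_Eb]
    norm_num
    exact zero_smul ℂ (1 : MatAlg 2)
  rw [Tsup, ContinuousLinearMap.comp_apply, h1, expT_E10]

lemma Tsup_E11 (h t : ℝ) : Tsup h t (Eb 1 1) = -(Complex.exp (-(t : ℂ)) • Eb 0 0) := by
  have h1 : (1 - Qdown) (Eb 1 1) = -(Eb 0 0) := by
    have hd : downEntry (Eb 1 1) = 1 := by simp
    rw [ContinuousLinearMap.sub_apply, ContinuousLinearMap.one_apply, Qdown_apply, hd, one_smul,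
      one_decomp]
    abel
  rw [Tsup, ContinuousLinearMap.comp_apply, h1, map_neg, expT_E00]

set_option maxRecDepth 10000 in
lemma tensor_eq (n : ℕ) (h t : ℝ) (B : MatAlg2n n) :
    tensorId n (Tsup h t) B =
      Complex.exp (-(t : ℂ)) • (incl n 0 ∘L proj n 0 ∘L B ∘L incl n 0 ∘L proj n 0)
      - Complex.exp (-(t : ℂ)) • (incl n 0 ∘L proj n 1 ∘L B ∘L incl n 1 ∘L proj n 0)
      + Complex.exp ((t : ℂ) * (2 * Complex.I * (h : ℂ) - 2⁻¹)) •
          (incl n 0 ∘L proj n 0 ∘L B ∘L incl n 1 ∘L proj n 1)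
      + Complex.exp ((t : ℂ) * (-(2 * Complex.I * (h : ℂ)) - 2⁻¹)) •
          (incl n 1 ∘L proj n 1 ∘L B ∘L incl n 0 ∘L proj n 0) := by
  have key : (Matrix.toEuclideanCLM (𝕜 := ℂ)).symm
      (Complex.exp (-(t : ℂ)) • (incl n 0 ∘L proj n 0 ∘L B ∘L incl n 0 ∘L proj n 0)
      - Complex.exp (-(t : ℂ)) • (incl n 0 ∘L proj n 1 ∘L B ∘L incl n 1 ∘L proj n 0)
      + Complex.exp ((t : ℂ) * (2 * Complex.I * (h : ℂ) - 2⁻¹)) •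
          (incl n 0 ∘L proj n 0 ∘L B ∘L incl n 1 ∘L proj n 1)
      + Complex.exp ((t : ℂ) * (-(2 * Complex.I * (h : ℂ)) - 2⁻¹)) •
          (incl n 1 ∘L proj n 1 ∘L B ∘L incl n 0 ∘L proj n 0)) =
      Matrix.of (fun p q : Fin 2 × Fin n =>
        ∑ a : Fin 2, ∑ b : Fin 2,
          (Matrix.toEuclideanCLM (𝕜 := ℂ)).symm
              ((Tsup h t) (Matrix.toEuclideanCLM (𝕜 := ℂ) (Matrix.single a b 1))) p.1 q.1 *
            (Matrix.toEuclideanCLM (𝕜 := ℂ)).symm B (a, p.2) (b, q.2)) := by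
    ext ⟨p1, p2⟩ ⟨q1, q2⟩
    rw [clm_entry]
    simp only [Matrix.of_apply, Fin.sum_univ_two, Eb_def, Tsup_E00, Tsup_E01, Tsup_E10, Tsup_E11,
      map_smul, map_neg, symm_Eb]
    simp only [clm_entry B]
    simp only [ContinuousLinearMap.add_apply, ContinuousLinearMap.sub_apply,
      ContinuousLinearMap.smul_apply, ContinuousLinearMap.comp_apply,
      proj_single, apply_ite, map_zero, incl_single]
    simp only [apply_ite (fun v : EuclideanSpace ℂ (Fin 2 × Fin n) => v (p1, p2)), PiLp.add_apply, PiLp.sub_apply, PiLp.smul_apply, smul_eq_mul]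
    fin_cases p1 <;> fin_cases q1 <;>
      simp [Matrix.single, incl_apply, proj_apply, Matrix.smul_apply, Matrix.neg_apply,
        Matrix.of_apply] <;>
      ring
  rw [tensorId, ← key, StarAlgEquiv.apply_symm_apply]

end Aux5
end QMS

namespace QMS
section Final

lemma sandwich_norm {n : ℕ} (u a b v : Fin 2) (B : MatAlg2n n) :
    ‖incl n u ∘L proj n a ∘L B ∘L incl n b ∘L proj n v‖ ≤ ‖B‖ := by
  apply ContinuousLinearMap.opNorm_le_bound _ (norm_nonneg B)
  intro x
  simp only [ContinuousLinearMap.comp_apply]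
  rw [incl_norm]
  refine le_trans (norm_proj_le _ _) ?_
  refine le_trans (B.le_opNorm _) ?_
  apply mul_le_mul_of_nonneg_left _ (norm_nonneg B)
  rw [incl_norm]
  exact norm_proj_le _ _

/-- Dissipative quantum Ising chain: single-site estimates. -/
theorem dissipative_ising_single_site (h : ℝ) :
    (Qdown ∘L Qdown = Qdown) ∧
    (∀ A : MatAlg 2, ∃ c : ℂ, Qdown A = c • (1 : MatAlg 2)) ∧
    Qdown (1 : MatAlg 2) = 1 ∧
    Qdown ∘L Gising h = 0 ∧ Gising h ∘L Qdown = 0 ∧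
    (∀ t : ℝ, 0 ≤ t → ∀ A : MatAlg 2,
      downEntry (expCLM (t • Gising h) A) = downEntry A) ∧
    (∀ n : ℕ, 1 ≤ n → ∀ t : ℝ, 0 ≤ t → ∀ B : MatAlg2n n,
      ‖tensorId n (expCLM (t • Gising h) ∘L (1 - Qdown)) B‖ ≤
        4 * Real.exp (-t / 2) * ‖B‖) := by
  refine ⟨?_, ?_, ?_, ?_, ?_, ?_, ?_⟩
  · ext A
    simp [ContinuousLinearMap.comp_apply, Qdown_apply, downEntry_smul, downEntry_one]
  · exact fun A => ⟨downEntry A, rfl⟩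
  · rw [Qdown_apply, downEntry_one, one_smul]
  · ext A
    simp [ContinuousLinearMap.comp_apply, Qdown_apply, downEntry_G]
  · ext A
    simp [ContinuousLinearMap.comp_apply, Qdown_apply, map_smul, G_one]
  · exact fun t _ A => downEntry_expT h t A
  · intro n _ t ht B
    rw [show expCLM (t • Gising h) ∘L (1 - Qdown) = Tsup h t from rfl, tensor_eq]
    have e1 : ‖Complex.exp (-(t : ℂ))‖ = Real.exp (-t) := by
      rw [Complex.norm_exp]
      norm_num
    have e2 : ‖Complex.exp ((t : ℂ) * (2 * Complex.I * (h : ℂ) - 2⁻¹))‖ = Real.exp (-t / 2) := by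
      rw [Complex.norm_exp]
      congr 1
      simp [Complex.mul_re]
      ring
    have e3 : ‖Complex.exp ((t : ℂ) * (-(2 * Complex.I * (h : ℂ)) - 2⁻¹))‖
        = Real.exp (-t / 2) := by
      rw [Complex.norm_exp]
      congr 1
      simp [Complex.mul_re]
      ring
    have hB := norm_nonneg B
    have s1 := sandwich_norm (n := n) 0 0 0 0 B
    have s2 := sandwich_norm (n := n) 0 1 1 0 B
    have s3 := sandwich_norm (n := n) 0 0 1 1 B
    have s4 := sandwich_norm (n := n) 1 1 0 0 B
    have hexp : Real.exp (-t) ≤ Real.exp (-t / 2) := Real.exp_le_exp.mpr (by linarith)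
    have hexp2 : (0 : ℝ) < Real.exp (-t / 2) := Real.exp_pos _
    have hexp3 : (0 : ℝ) ≤ Real.exp (-t) := (Real.exp_pos _).le
    calc ‖Complex.exp (-(t : ℂ)) • (incl n 0 ∘L proj n 0 ∘L B ∘L incl n 0 ∘L proj n 0)
      - Complex.exp (-(t : ℂ)) • (incl n 0 ∘L proj n 1 ∘L B ∘L incl n 1 ∘L proj n 0)
      + Complex.exp ((t : ℂ) * (2 * Complex.I * (h : ℂ) - 2⁻¹)) •
          (incl n 0 ∘L proj n 0 ∘L B ∘L incl n 1 ∘L proj n 1)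
      + Complex.exp ((t : ℂ) * (-(2 * Complex.I * (h : ℂ)) - 2⁻¹)) •
          (incl n 1 ∘L proj n 1 ∘L B ∘L incl n 0 ∘L proj n 0)‖
        ≤ ‖Complex.exp (-(t : ℂ)) • (incl n 0 ∘L proj n 0 ∘L B ∘L incl n 0 ∘L proj n 0)‖
          + ‖Complex.exp (-(t : ℂ)) • (incl n 0 ∘L proj n 1 ∘L B ∘L incl n 1 ∘L proj n 0)‖
          + ‖Complex.exp ((t : ℂ) * (2 * Complex.I * (h : ℂ) - 2⁻¹)) •
              (incl n 0 ∘L proj n 0 ∘L B ∘L incl n 1 ∘L proj n 1)‖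
          + ‖Complex.exp ((t : ℂ) * (-(2 * Complex.I * (h : ℂ)) - 2⁻¹)) •
              (incl n 1 ∘L proj n 1 ∘L B ∘L incl n 0 ∘L proj n 0)‖ := by
          refine le_trans (norm_add_le _ _) ?_
          refine add_le_add_left ?_ _
          refine le_trans (norm_add_le _ _) ?_
          refine add_le_add_left ?_ _
          exact norm_sub_le _ _
      _ ≤ Real.exp (-t) * ‖B‖ + Real.exp (-t) * ‖B‖ + Real.exp (-t / 2) * ‖B‖
          + Real.exp (-t / 2) * ‖B‖ := by
          have bnd : ∀ (c : ℂ) (S : MatAlg2n n) (e : ℝ), ‖c‖ = e → ‖S‖ ≤ ‖B‖ →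
              ‖c • S‖ ≤ e * ‖B‖ := by
            intro c S e hc hS
            refine le_trans (ContinuousLinearMap.opNorm_smul_le _ _) ?_
            rw [hc]
            exact mul_le_mul_of_nonneg_left hS (hc ▸ norm_nonneg c)
          exact add_le_add (add_le_add (add_le_add (bnd _ _ _ e1 s1) (bnd _ _ _ e1 s2))
            (bnd _ _ _ e2 s3)) (bnd _ _ _ e3 s4)
      _ ≤ 4 * Real.exp (-t / 2) * ‖B‖ := by nlinarith

end Final
end QMS
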